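/- Let d ≥ 1 and M ≥ 1, let A¹, …, A^M be finite subsets of ℝ^d (the action sets), and let θ ∈ ℝ^d. Assume that for each m ∈ {1,…,M} there is a unique maximizer x*_m of x ↦ ⟨x, θ⟩ over A^m, and define the gaps Δ^m_x = ⟨x*_m − x, θ⟩ for x ∈ A^m (so Δ^m_x > 0 for every x ≠ x*_m). If the set of optimal arms {x*_1, …, x*_M} spans ℝ^d, then there exists an assignment of nonnegative reals α_{x,m} (for m ∈ {1,…,M} and x ∈ A^m) such that: (i) the matrix G_α = Σ_{m=1}^M Σ_{x ∈ A^m} α_{x,m} · x xᵀ is positive definite; (ii) for every context m and every suboptimal arm x ∈ A^m (i.e. x ≠ x*_m), xᵀ G_α⁻¹ x ≤ (Δ^m_x)²/2; and (iii) Σ_{m=1}^M Σ_{x ∈ A^m} α_{x,m} · Δ^m_x = 0. -/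

import Mathlib

open Matrix

lemma aux_quad {d M : ℕ} (xstar : Fin M → (Fin d → ℝ)) (v : Fin d → ℝ) :
    v ⬝ᵥ (∑ m, Matrix.vecMulVec (xstar m) (xstar m)) *ᵥ v = ∑ m, (xstar m ⬝ᵥ v) ^ 2 := by
  simp only [mulVec, dotProduct, Matrix.sum_apply, vecMulVec_apply, Finset.sum_mul,
    Finset.mul_sum, sq]
  conv_lhs => rw [Finset.sum_congr rfl fun i _ => Finset.sum_comm]
  rw [Finset.sum_comm]
  refine Finset.sum_congr rfl fun m _ => ?_
  rw [Finset.sum_comm]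
  exact Finset.sum_congr rfl fun i _ => Finset.sum_congr rfl fun j _ => by ring

lemma aux_posdef {d M : ℕ} (xstar : Fin M → (Fin d → ℝ))
    (hspan : Submodule.span ℝ (Set.range xstar) = ⊤) :
    (∑ m, Matrix.vecMulVec (xstar m) (xstar m)).PosDef := by
  refine Matrix.posDef_iff_dotProduct_mulVec.mpr ⟨?_, ?_⟩
  · ext i j
    simp [Matrix.conjTranspose_apply, Matrix.sum_apply, Matrix.vecMulVec_apply, mul_comm]
  · intro v hv
    simp only [star_trivial]
    rw [aux_quad]
    have hnonneg : ∀ m ∈ Finset.univ, (0:ℝ) ≤ (xstar m ⬝ᵥ v) ^ 2 := fun m _ => sq_nonneg _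
    rcases (Finset.sum_nonneg hnonneg).lt_or_eq with h | h
    · exact h
    exfalso
    have hall : ∀ m : Fin M, xstar m ⬝ᵥ v = 0 := by
      intro m
      have := (Finset.sum_eq_zero_iff_of_nonneg hnonneg).mp h.symm m (Finset.mem_univ m)
      exact (pow_eq_zero_iff two_ne_zero).mp this
    have hspan' : ∀ u ∈ Submodule.span ℝ (Set.range xstar), u ⬝ᵥ v = 0 := by
      intro u hu
      induction hu using Submodule.span_induction with
      | mem u hu => obtain ⟨m, rfl⟩ := hu; exact hall m
      | zero => simp
      | add u w _ _ h1 h2 => rw [add_dotProduct, h1, h2, add_zero]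
      | smul a u _ h1 => rw [smul_dotProduct, h1, smul_zero]
    have : v ⬝ᵥ v = 0 := hspan' v (hspan ▸ Submodule.mem_top)
    exact hv (dotProduct_self_eq_zero.mp this)

theorem stmt4 {d M : ℕ} (hd : 1 ≤ d) (hM : 1 ≤ M)
    (A : Fin M → Finset (Fin d → ℝ)) (θ : Fin d → ℝ)
    (xstar : Fin M → (Fin d → ℝ))
    (hmem : ∀ m, xstar m ∈ A m)
    (hunique : ∀ m, ∀ x ∈ A m, x ≠ xstar m → x ⬝ᵥ θ < xstar m ⬝ᵥ θ)
    (hspan : Submodule.span ℝ (Set.range xstar) = ⊤) :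
    ∃ α : Fin M → (Fin d → ℝ) → ℝ,
      (∀ m x, 0 ≤ α m x) ∧
      (∑ m, ∑ x ∈ A m, α m x • Matrix.vecMulVec x x).PosDef ∧
      (∀ m, ∀ x ∈ A m, x ≠ xstar m →
        x ⬝ᵥ ((∑ m', ∑ y ∈ A m', α m' y • Matrix.vecMulVec y y)⁻¹).mulVec x ≤
          ((xstar m - x) ⬝ᵥ θ) ^ 2 / 2) ∧
      (∑ m, ∑ x ∈ A m, α m x * ((xstar m - x) ⬝ᵥ θ)) = 0 := by
  classical
  set G0 : Matrix (Fin d) (Fin d) ℝ := ∑ m, Matrix.vecMulVec (xstar m) (xstar m) with hG0def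
  have hG0 : G0.PosDef := aux_posdef xstar hspan
  have hG0inv : G0⁻¹.PosDef := hG0.inv
  set q : (Fin d → ℝ) → ℝ := fun x => x ⬝ᵥ G0⁻¹ *ᵥ x with hqdef
  have hqnonneg : ∀ x, 0 ≤ q x := by
    intro x
    by_cases hx : x = 0
    · simp [hqdef, hx]
    · exact le_of_lt (by simpa using hG0inv.dotProduct_mulVec_pos hx)
  set T : ℝ := ∑ m, ∑ x ∈ A m, 2 * q x / ((xstar m - x) ⬝ᵥ θ) ^ 2 with hTdef
  have hterm_nonneg : ∀ m : Fin M, ∀ x, (0:ℝ) ≤ 2 * q x / ((xstar m - x) ⬝ᵥ θ) ^ 2 :=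
    fun m x => div_nonneg (by linarith [hqnonneg x]) (sq_nonneg _)
  have hT_nonneg : 0 ≤ T := Finset.sum_nonneg fun m _ =>
    Finset.sum_nonneg fun x _ => hterm_nonneg m x
  set c : ℝ := T + 1 with hcdef
  have hc : (0:ℝ) < c := by linarith
  set α : Fin M → (Fin d → ℝ) → ℝ := fun m x => if x = xstar m then c else 0 with hαdef
  have hG : (∑ m, ∑ x ∈ A m, α m x • Matrix.vecMulVec x x) = c • G0 := by
    rw [hG0def, Finset.smul_sum]
    refine Finset.sum_congr rfl fun m _ => ?_
    rw [show (∑ x ∈ A m, α m x • Matrix.vecMulVec x x)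
        = ∑ x ∈ A m, (if x = xstar m then c • Matrix.vecMulVec x x else 0) from
      Finset.sum_congr rfl fun x _ => by by_cases h : x = xstar m <;> simp [hαdef, h]]
    rw [Finset.sum_ite_eq' (A m) (xstar m) (fun x => c • Matrix.vecMulVec x x)]
    simp [hmem m]
  have hGpd : (∑ m, ∑ x ∈ A m, α m x • Matrix.vecMulVec x x).PosDef := by
    rw [hG]
    refine Matrix.posDef_iff_dotProduct_mulVec.mpr ⟨?_, fun v hv => ?_⟩
    · ext i j
      simp only [Matrix.conjTranspose_apply, Matrix.smul_apply, star_trivial, smul_eq_mul]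
      have hsym := congrFun (congrFun hG0.1 i) j
      simp only [Matrix.conjTranspose_apply, star_trivial] at hsym
      rw [hsym]
    · simp only [star_trivial, Matrix.smul_mulVec, dotProduct_smul, smul_eq_mul]
      exact mul_pos hc (by simpa using hG0.dotProduct_mulVec_pos hv)
  refine ⟨α, ?_, hGpd, ?_, ?_⟩
  · intro m x
    by_cases h : x = xstar m <;> simp [hαdef, h, le_of_lt hc]
  · intro m x hxA hxne
    have hΔ : 0 < (xstar m - x) ⬝ᵥ θ := by
      have := hunique m x hxA hxne
      rw [sub_dotProduct]
      linarith
    have hΔ2 : 0 < ((xstar m - x) ⬝ᵥ θ) ^ 2 := pow_pos hΔ 2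
    -- the inverse of c • G0
    have hcne : c ≠ 0 := ne_of_gt hc
    letI : Invertible c := invertibleOfNonzero hcne
    have hinv : (∑ m', ∑ y ∈ A m', α m' y • Matrix.vecMulVec y y)⁻¹ = c⁻¹ • G0⁻¹ := by
      rw [hG, Matrix.inv_smul (A := G0) c hG0.det_pos.ne'.isUnit, invOf_eq_inv c]
    rw [hinv]
    have hval : x ⬝ᵥ (c⁻¹ • G0⁻¹) *ᵥ x = c⁻¹ * q x := by
      simp [Matrix.smul_mulVec, dotProduct_smul, hqdef]
    rw [hval]
    -- bound: 2 * q x / Δ² ≤ T ≤ c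
    have hle : 2 * q x / ((xstar m - x) ⬝ᵥ θ) ^ 2 ≤ T := by
      rw [hTdef]
      calc 2 * q x / ((xstar m - x) ⬝ᵥ θ) ^ 2
          ≤ ∑ y ∈ A m, 2 * q y / ((xstar m - y) ⬝ᵥ θ) ^ 2 :=
            Finset.single_le_sum (fun y _ => hterm_nonneg m y) hxA
        _ ≤ ∑ m', ∑ y ∈ A m', 2 * q y / ((xstar m' - y) ⬝ᵥ θ) ^ 2 :=
            Finset.single_le_sum
              (fun m' _ => Finset.sum_nonneg fun y _ => hterm_nonneg m' y)
              (Finset.mem_univ m)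
    have hcge : 2 * q x / ((xstar m - x) ⬝ᵥ θ) ^ 2 ≤ c := by rw [hcdef]; linarith
    have h2q : 2 * q x ≤ c * ((xstar m - x) ⬝ᵥ θ) ^ 2 := by
      rwa [div_le_iff₀ hΔ2] at hcge
    rw [inv_mul_eq_div, div_le_div_iff₀ hc (by norm_num : (0:ℝ) < 2)]
    nlinarith
  · refine Finset.sum_eq_zero fun m _ => Finset.sum_eq_zero fun x _ => ?_
    by_cases h : x = xstar m
    · simp [h]
    · simp [hαdef, h]
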